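/- Two-dimensional torus Weyl law lower bound: for the flat torus (ℝ/2πℤ)², the Laplacian eigenvalue counting function N(λ) = #{(m,n) ∈ ℤ² : m² + n² < λ²} satisfies N(λ)/λ² → π as λ → ∞ (Gauss circle problem leading term). -/

import Mathlib

open Real Filter MeasureTheory Metric Set

noncomputable section

namespace TorusWeylAux

/-- The half-open unit square based at the lattice point `p`, inside `ℂ`. -/
def usq (p : ℤ × ℤ) : Set ℂ :=
  Complex.measurableEquivRealProd ⁻¹'
    (Set.Ico (p.1 : ℝ) ((p.1 : ℝ) + 1) ×ˢ Set.Ico (p.2 : ℝ) ((p.2 : ℝ) + 1))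

lemma mem_usq {p : ℤ × ℤ} {z : ℂ} :
    z ∈ usq p ↔ ((p.1 : ℝ) ≤ z.re ∧ z.re < (p.1 : ℝ) + 1) ∧
      ((p.2 : ℝ) ≤ z.im ∧ z.im < (p.2 : ℝ) + 1) := Iff.rfl

lemma measurableSet_usq (p : ℤ × ℤ) : MeasurableSet (usq p) :=
  Complex.measurableEquivRealProd.measurable (measurableSet_Ico.prod measurableSet_Ico)

lemma volume_usq (p : ℤ × ℤ) : volume (usq p) = 1 := by
  rw [usq, Complex.volume_preserving_equiv_real_prod.measure_preimage
    (measurableSet_Ico.prod measurableSet_Ico).nullMeasurableSet]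
  rw [Measure.volume_eq_prod, Measure.prod_prod, Real.volume_Ico, Real.volume_Ico]
  simp

lemma usq_disjoint : Pairwise (Function.onFun Disjoint usq) := by
  intro p q hpq
  rw [Function.onFun, Set.disjoint_left]
  intro z hp hq
  apply hpq
  rw [mem_usq] at hp hq
  have h1 : p.1 = q.1 := by
    have e1 : ⌊z.re⌋ = p.1 := Int.floor_eq_iff.2 ⟨hp.1.1, by exact_mod_cast hp.1.2⟩
    have e2 : ⌊z.re⌋ = q.1 := Int.floor_eq_iff.2 ⟨hq.1.1, by exact_mod_cast hq.1.2⟩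
    omega
  have h2 : p.2 = q.2 := by
    have e1 : ⌊z.im⌋ = p.2 := Int.floor_eq_iff.2 ⟨hp.2.1, by exact_mod_cast hp.2.2⟩
    have e2 : ⌊z.im⌋ = q.2 := Int.floor_eq_iff.2 ⟨hq.2.1, by exact_mod_cast hq.2.2⟩
    omega
  exact Prod.ext h1 h2

/-- The complex point attached to a lattice point. -/
def cpt (p : ℤ × ℤ) : ℂ := ⟨(p.1 : ℝ), (p.2 : ℝ)⟩

lemma abs_cpt_sq (p : ℤ × ℤ) :
    (‖cpt p‖) ^ 2 = (p.1 : ℝ) ^ 2 + (p.2 : ℝ) ^ 2 := by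
  rw [Complex.sq_norm, cpt, Complex.normSq_mk]; ring

lemma finite_A (lam : ℝ) :
    {p : ℤ × ℤ | (p.1 : ℝ) ^ 2 + (p.2 : ℝ) ^ 2 < lam ^ 2}.Finite := by
  apply Set.Finite.subset
    (Set.finite_Icc (-⌈|lam|⌉, -⌈|lam|⌉) (⌈|lam|⌉, ⌈|lam|⌉))
  intro p hp
  simp only [Set.mem_setOf_eq] at hp
  have h1 : (p.1 : ℝ) ^ 2 < lam ^ 2 := by nlinarith [sq_nonneg ((p.2 : ℝ))]
  have h2 : (p.2 : ℝ) ^ 2 < lam ^ 2 := by nlinarith [sq_nonneg ((p.1 : ℝ))]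
  have hca : (|lam| : ℝ) ≤ (⌈|lam|⌉ : ℝ) := Int.le_ceil _
  have hb1 : -((⌈|lam|⌉ : ℝ)) ≤ (p.1 : ℝ) ∧ (p.1 : ℝ) ≤ (⌈|lam|⌉ : ℝ) := by
    constructor <;> nlinarith [abs_nonneg lam, sq_abs lam]
  have hb2 : -((⌈|lam|⌉ : ℝ)) ≤ (p.2 : ℝ) ∧ (p.2 : ℝ) ≤ (⌈|lam|⌉ : ℝ) := by
    constructor <;> nlinarith [abs_nonneg lam, sq_abs lam]
  rw [Set.mem_Icc]
  refine ⟨Prod.le_def.2 ⟨?_, ?_⟩, Prod.le_def.2 ⟨?_, ?_⟩⟩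
  · exact_mod_cast hb1.1
  · exact_mod_cast hb2.1
  · exact_mod_cast hb1.2
  · exact_mod_cast hb2.2

lemma abs_sub_cpt_le {p : ℤ × ℤ} {z : ℂ} (hz : z ∈ usq p) :
    ‖z - cpt p‖ ≤ 2 := by
  rw [mem_usq] at hz
  calc ‖z - cpt p‖ ≤ |(z - cpt p).re| + |(z - cpt p).im| :=
        Complex.norm_le_abs_re_add_abs_im _
    _ ≤ 2 := by
        have h1 : (z - cpt p).re = z.re - (p.1 : ℝ) := by simp [cpt]
        have h2 : (z - cpt p).im = z.im - (p.2 : ℝ) := by simp [cpt]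
        rw [h1, h2, abs_of_nonneg (by linarith [hz.1.1]), abs_of_nonneg (by linarith [hz.2.1])]
        linarith [hz.1.2, hz.2.2]

lemma card_bounds {lam : ℝ} (hlam : 3 ≤ lam) :
    π * (lam - 2) ^ 2 ≤
      (Nat.card {p : ℤ × ℤ | (p.1 : ℝ) ^ 2 + (p.2 : ℝ) ^ 2 < lam ^ 2} : ℝ) ∧
    (Nat.card {p : ℤ × ℤ | (p.1 : ℝ) ^ 2 + (p.2 : ℝ) ^ 2 < lam ^ 2} : ℝ) ≤
      π * (lam + 2) ^ 2 := by
  have hfin := finite_A lam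
  set F : Finset (ℤ × ℤ) := hfin.toFinset with hF
  have hmemF : ∀ p : ℤ × ℤ, p ∈ F ↔ (p.1 : ℝ) ^ 2 + (p.2 : ℝ) ^ 2 < lam ^ 2 := by
    intro p; rw [hF, Set.Finite.mem_toFinset]; rfl
  have hcard : (Nat.card {p : ℤ × ℤ | (p.1 : ℝ) ^ 2 + (p.2 : ℝ) ^ 2 < lam ^ 2}) = F.card := by
    rw [Nat.card_eq_card_finite_toFinset hfin]
  -- volume of the union of the unit squares
  set S : Set ℂ := ⋃ p ∈ F, usq p with hS
  have hvolS : volume S = (F.card : ENNReal) := by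
    rw [hS, measure_biUnion_finset (usq_disjoint.pairwiseDisjoint _)
      (fun p _ => measurableSet_usq p)]
    simp [volume_usq]
  -- lower inclusion : ball 0 (lam - 2) ⊆ S
  have hlow : ball (0 : ℂ) (lam - 2) ⊆ S := by
    intro z hz
    rw [mem_ball_zero_iff] at hz
    set p : ℤ × ℤ := (⌊z.re⌋, ⌊z.im⌋) with hp
    have hzsq : z ∈ usq p := by
      rw [mem_usq]
      exact ⟨⟨Int.floor_le _, by exact_mod_cast Int.lt_floor_add_one z.re⟩,
        ⟨Int.floor_le _, by exact_mod_cast Int.lt_floor_add_one z.im⟩⟩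
    have habs : ‖cpt p‖ < lam := by
      calc ‖cpt p‖ ≤ ‖z‖ + ‖z - cpt p‖ := by
            have := norm_sub_le (cpt p) z
            have h := norm_add_le z (cpt p - z)
            calc ‖cpt p‖ = ‖z + (cpt p - z)‖ := by ring_nf
              _ ≤ ‖z‖ + ‖cpt p - z‖ := norm_add_le _ _
              _ = ‖z‖ + ‖z - cpt p‖ := by rw [← neg_sub z (cpt p), norm_neg]
        _ < (lam - 2) + 2 := by
            have := abs_sub_cpt_le hzsq
            linarith
        _ = lam := by ring
    have hmem : p ∈ F := by
      rw [hmemF]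
      have h2 : (‖cpt p‖) ^ 2 < lam ^ 2 :=
        pow_lt_pow_left₀ habs (norm_nonneg _) (by norm_num)
      rwa [abs_cpt_sq] at h2
    exact Set.mem_biUnion hmem hzsq
  -- upper inclusion : S ⊆ ball 0 (lam + 2)
  have hup : S ⊆ ball (0 : ℂ) (lam + 2) := by
    intro z hz
    rw [hS, Set.mem_iUnion₂] at hz
    obtain ⟨p, hpF, hzsq⟩ := hz
    rw [mem_ball_zero_iff]
    have habs : ‖cpt p‖ < lam := by
      have h2 : (‖cpt p‖) ^ 2 < lam ^ 2 := by
        rw [abs_cpt_sq]; exact (hmemF p).1 hpF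
      exact lt_of_pow_lt_pow_left₀ 2 (by linarith) h2
    calc ‖z‖ = ‖cpt p + (z - cpt p)‖ := by ring_nf
      _ ≤ ‖cpt p‖ + ‖z - cpt p‖ := norm_add_le _ _
      _ < lam + 2 := by linarith [abs_sub_cpt_le hzsq]
  -- translate to volume inequalities
  have hvol1 : volume (ball (0 : ℂ) (lam - 2)) ≤ (F.card : ENNReal) := by
    rw [← hvolS]; exact measure_mono hlow
  have hvol2 : (F.card : ENNReal) ≤ volume (ball (0 : ℂ) (lam + 2)) := by
    rw [← hvolS]; exact measure_mono hup
  rw [Complex.volume_ball] at hvol1 hvol2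
  have hball : ∀ r : ℝ, 0 ≤ r →
      (ENNReal.ofReal r ^ 2 * (NNReal.pi : ENNReal)) = ENNReal.ofReal (π * r ^ 2) := by
    intro r hr
    rw [← ENNReal.ofReal_pow hr, ← ENNReal.ofReal_coe_nnreal, NNReal.coe_real_pi,
      ← ENNReal.ofReal_mul (by positivity), mul_comm]
  rw [hball _ (by linarith)] at hvol1
  rw [hball _ (by linarith)] at hvol2
  rw [show ((F.card : ENNReal)) = ENNReal.ofReal (F.card : ℝ) by
    rw [ENNReal.ofReal_natCast]] at hvol1 hvol2
  rw [ENNReal.ofReal_le_ofReal_iff (by positivity)] at hvol1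
  rw [ENNReal.ofReal_le_ofReal_iff (by positivity)] at hvol2
  rw [hcard]
  exact ⟨hvol1, hvol2⟩

lemma aux_tendsto (c : ℝ) :
    Tendsto (fun lam : ℝ => π * (lam + c) ^ 2 / lam ^ 2) atTop (nhds π) := by
  have h1 : Tendsto (fun lam : ℝ => c / lam) atTop (nhds 0) :=
    Tendsto.div_atTop tendsto_const_nhds tendsto_id
  have h2 : Tendsto (fun lam : ℝ => π * (1 + c / lam) ^ 2) atTop (nhds (π * (1 + 0) ^ 2)) :=
    tendsto_const_nhds.mul ((tendsto_const_nhds.add h1).pow 2)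
  have h3 : π * (1 + (0 : ℝ)) ^ 2 = π := by ring
  rw [h3] at h2
  apply h2.congr'
  filter_upwards [eventually_gt_atTop (0 : ℝ)] with lam hlam
  field_simp

end TorusWeylAux

end

/-- Gauss circle / 2D torus Weyl law leading term:
`N(lam) = #{(m,n) ∈ ℤ² : m² + n² < lam²}` satisfies `N(lam)/lam² → π` as `lam → ∞`. -/
theorem torus_weyl_law_leading_term :
    Tendsto
      (fun lam : ℝ =>
        (Nat.card {p : ℤ × ℤ | (p.1 : ℝ) ^ 2 + (p.2 : ℝ) ^ 2 < lam ^ 2} : ℝ) / lam ^ 2)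
      atTop (nhds π) := by
  have hlow : Tendsto (fun lam : ℝ => π * (lam + (-2)) ^ 2 / lam ^ 2) atTop (nhds π) :=
    TorusWeylAux.aux_tendsto (-2)
  have hup : Tendsto (fun lam : ℝ => π * (lam + 2) ^ 2 / lam ^ 2) atTop (nhds π) :=
    TorusWeylAux.aux_tendsto 2
  apply tendsto_of_tendsto_of_tendsto_of_le_of_le' hlow hup
  · filter_upwards [eventually_ge_atTop (3 : ℝ)] with lam hlam
    have h := (TorusWeylAux.card_bounds hlam).1
    have hpos : (0 : ℝ) < lam ^ 2 := by positivity
    rw [show lam + (-2) = lam - 2 by ring]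
    exact div_le_div_of_nonneg_right h hpos.le
  · filter_upwards [eventually_ge_atTop (3 : ℝ)] with lam hlam
    have h := (TorusWeylAux.card_bounds hlam).2
    have hpos : (0 : ℝ) < lam ^ 2 := by positivity
    exact div_le_div_of_nonneg_right h hpos.le
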